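/- Let π^λ w ∈ Y ⋊ Wᵛ and β[n] ∈ Φᵃ₊ (with β ∈ Φ₊, n ∈ ℤ), and write π^μ w' = s_{β[n]} π^λ w. Suppose (π^λ w)⁻¹(β[n]) ∈ Φᵃ₊. Then μ = λ + (n − ⟨λ,β⟩)β^∨, s_β(μ) = λ − nβ^∨, and λ lies on the segment [μ, s_β(μ)] (i.e. λ = μ − (n−⟨λ,β⟩)β^∨ with sgn(n)·(n−⟨λ,β⟩) ≥ 0, so λ is a convex combination of μ and s_β(μ) in Y⊗ℝ). In particular, if μ ∈ Y⁺ then λ ∈ Y⁺. -/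

import Mathlib

/-- The multiplicative group structure (composition) on `AddAut A`, as in the older Mathlib. -/
instance AddAut.group {A : Type*} [Add A] : Group (AddAut A) where
  mul g h := AddEquiv.trans h g
  one := AddEquiv.refl _
  inv := AddEquiv.symm
  mul_assoc _ _ _ := rfl
  one_mul _ := rfl
  mul_one _ := rfl
  inv_mul_cancel := AddEquiv.self_trans_symm

/-- Sign of an integer, with the convention `isgn 0 = 1`. -/
def isgn (n : ℤ) : ℤ := if 0 ≤ n then 1 else -1

/-- A Kac–Moody root datum: a finite index set `I`, a generalized Cartan matrix `A`,
free `ℤ`-modules `X` and `Y` of finite rank in perfect duality `pairE`, and linearly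
independent families of simple roots `α` and simple coroots `αv` with
`⟨αv i, α j⟩ = A i j`. -/
structure KM (I X Y : Type*) [Fintype I] [AddCommGroup X] [AddCommGroup Y] where
  A : I → I → ℤ
  pairE : Y ≃+ (X →+ ℤ)
  α : I → X
  αv : I → Y
  pair_av_a : ∀ i j, pairE (αv i) (α j) = A i j
  A_diag : ∀ i, A i i = 2
  A_offdiag : ∀ i j, i ≠ j → A i j ≤ 0
  A_zero_iff : ∀ i j, A i j = 0 → A j i = 0
  freeX : Module.Free ℤ X
  freeY : Module.Free ℤ Y
  finX : Module.Finite ℤ X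
  finY : Module.Finite ℤ Y
  indep_α : LinearIndependent ℤ α
  indep_αv : LinearIndependent ℤ αv

namespace KM

variable {I X Y : Type*} [Fintype I] [AddCommGroup X] [AddCommGroup Y] (D : KM I X Y)

open scoped Classical

/-- The duality pairing `⟨y, x⟩`. -/
def pr (y : Y) (x : X) : ℤ := D.pairE y x

/-- Underlying function of the simple reflection `s_i` on `X`. -/
def sXfun (i : I) (x : X) : X := x - D.pr (D.αv i) x • D.α i

lemma sX_invol (i : I) : Function.Involutive (D.sXfun i) := by
  intro x
  have h2 : D.pairE (D.αv i) (D.α i) = 2 := by rw [D.pair_av_a, D.A_diag]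
  show (x - D.pairE (D.αv i) x • D.α i) -
      D.pairE (D.αv i) (x - D.pairE (D.αv i) x • D.α i) • D.α i = x
  rw [map_sub, map_zsmul, h2, smul_eq_mul]
  have h : D.pairE (D.αv i) x - D.pairE (D.αv i) x * 2 = -(D.pairE (D.αv i) x) := by ring
  rw [h, neg_smul]
  abel

/-- The simple reflection `s_i : x ↦ x - ⟨αv i, x⟩ • α i` as an automorphism of `X`. -/
def sX (i : I) : AddAut X :=
  AddEquiv.mk' (D.sX_invol i).toPerm (by
    intro x y
    show ((x + y) - D.pairE (D.αv i) (x + y) • D.α i)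
        = (x - D.pairE (D.αv i) x • D.α i) + (y - D.pairE (D.αv i) y • D.α i)
    rw [map_add, add_smul]
    abel)

/-- The vectorial Weyl group `Wᵛ`, as the subgroup of `AddAut X` generated by the
simple reflections. -/
def Wg : Subgroup (AddAut X) := Subgroup.closure (Set.range D.sX)

/-- The contragredient action of an automorphism `f` of `X` on `Y`; it is characterized by
`⟨actY f y, x⟩ = ⟨y, f⁻¹ x⟩`. -/
def actY (f : AddAut X) (y : Y) : Y :=
  D.pairE.symm ((D.pairE y).comp (AddEquiv.toAddMonoidHom (AddEquiv.symm f)))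

/-- The set of real roots `Φ = Wᵛ · {α i}`. -/
def Phi : Set X := {x | ∃ p : AddAut X × I, p.1 ∈ D.Wg ∧ x = p.1 (D.α p.2)}

/-- The set of positive real roots `Φ₊`. -/
def PhiPos : Set X := {x | x ∈ D.Phi ∧ ∃ c : I → ℕ, x = ∑ i, (c i : ℤ) • D.α i}

/-- The set of negative real roots `Φ₋ = -Φ₊`. -/
def PhiNeg : Set X := {x | -x ∈ D.PhiPos}

/-- The coroot `β^∨` of a real root `β`: if `β = w (α i)` then `β^∨ = w (αv i)`
(this is independent of the chosen expression). -/
noncomputable def coroot (x : X) : Y :=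
  if h : ∃ p : AddAut X × I, p.1 ∈ D.Wg ∧ x = p.1 (D.α p.2) then
    D.actY h.choose.1 (D.αv h.choose.2)
  else 0

/-- The reflection `s_β` associated to a real root `β`: if `β = w (α i)` then
`s_β = w s_i w⁻¹` (independent of the chosen expression). -/
noncomputable def srefl (x : X) : AddAut X :=
  if h : ∃ p : AddAut X × I, p.1 ∈ D.Wg ∧ x = p.1 (D.α p.2) then
    h.choose.1 * D.sX h.choose.2 * h.choose.1⁻¹
  else 1

/-- The integral fundamental chamber `Y^{++}` of dominant coweights. -/
def Ypp : Set Y := {y | ∀ i, 0 ≤ D.pr y (D.α i)}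

/-- The integral Tits cone `Y⁺ = Wᵛ · Y^{++}`. -/
def Yplus : Set Y := {y | ∃ p : AddAut X × Y, p.1 ∈ D.Wg ∧ p.2 ∈ D.Ypp ∧ y = D.actY p.1 p.2}

/-- The dominant representative `λ^{++}` of `λ ∈ Y⁺` (the unique dominant element of the
orbit `Wᵛ · λ`). -/
noncomputable def dompp (y : Y) : Y :=
  if h : ∃ p : AddAut X × Y, p.1 ∈ D.Wg ∧ p.2 ∈ D.Ypp ∧ y = D.actY p.1 p.2 then
    h.choose.2
  else y

/-- The inversion set `Inv(w) = {α ∈ Φ₊ | w α ∈ Φ₋}`. -/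
def invSet (w : AddAut X) : Set X := {a | a ∈ D.PhiPos ∧ w a ∈ D.PhiNeg}

/-- The Bruhat length `ℓ(w) = |Inv(w)|`. -/
noncomputable def len (w : AddAut X) : ℕ := (D.invSet w).ncard

/-- The relative length `ℓ_v(w) = |Inv(w⁻¹)∖Inv(v⁻¹)| − |Inv(w⁻¹)∩Inv(v⁻¹)|`. -/
noncomputable def rlen (v w : AddAut X) : ℤ :=
  ((D.invSet w⁻¹ \ D.invSet v⁻¹).ncard : ℤ) - ((D.invSet w⁻¹ ∩ D.invSet v⁻¹).ncard : ℤ)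

/-- `v^λ`: the minimal-length element of `Wᵛ` sending `λ^{++}` to `λ`. -/
noncomputable def vmin (l : Y) : AddAut X :=
  if h : ∃ w : AddAut X, w ∈ D.Wg ∧ D.actY w (D.dompp l) = l ∧
      ∀ w' : AddAut X, w' ∈ D.Wg → D.actY w' (D.dompp l) = l → D.len w ≤ D.len w'
  then h.choose else 1

/-- The set of reflections of `Wᵛ`. -/
def reflections : Set (AddAut X) := {r | ∃ b ∈ D.PhiPos, r = D.srefl b}

/-- One step of the Bruhat order on `Wᵛ`. -/
def vectStep (u u' : AddAut X) : Prop :=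
  ∃ r ∈ D.reflections, u' = u * r ∧ D.len u < D.len u'

/-- The Bruhat order on `Wᵛ`. -/
def vlt : AddAut X → AddAut X → Prop := Relation.TransGen D.vectStep

/-- One step of the relative Bruhat order `<_v` on `Wᵛ`. -/
def rvStep (v u u' : AddAut X) : Prop :=
  ∃ r ∈ D.reflections, u' = u * r ∧ D.rlen v u < D.rlen v u'

/-- The relative Bruhat order `<_v` on `Wᵛ`. -/
def rvlt (v : AddAut X) : AddAut X → AddAut X → Prop := Relation.TransGen (D.rvStep v)

/-- The stabilizer `W_λ` of `λ` in `Wᵛ`. -/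
def Wstab (l : Y) : Set (AddAut X) := {u | u ∈ D.Wg ∧ D.actY u l = l}

/-- `v` is the minimal-length representative of its coset `v W_λ`. -/
def IsMinRep (l : Y) (v : AddAut X) : Prop :=
  v ∈ D.Wg ∧ ∀ u ∈ D.Wstab l, D.len v ≤ D.len (v * u)

/-- The action of `π^λ w ∈ Y ⋊ Wᵛ` on affine roots:
`π^λ w (β + nπ) = w β + (n + ⟨λ, w β⟩)π`. -/
def affAct (a : Y × AddAut X) (r : X × ℤ) : X × ℤ :=
  (a.2 r.1, r.2 + D.pr a.1 (a.2 r.1))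

/-- The set `Φᵃ₊` of positive affine roots. -/
def PhiAffPos : Set (X × ℤ) :=
  {r | r.1 ∈ D.Phi ∧ (0 < r.2 ∨ (r.2 = 0 ∧ r.1 ∈ D.PhiPos))}

/-- The affine root `β[n] = sgn(n)β + |n|π`. -/
def aroot (b : X) (n : ℤ) : X × ℤ := (isgn n • b, |n|)

/-- The affine reflection `s_{β[n]} = π^{nβ^∨} s_β`, as an element of `Y ⋊ Wᵛ`. -/
noncomputable def saff (b : X) (n : ℤ) : Y × AddAut X := (n • D.coroot b, D.srefl b)

/-- Multiplication in the semidirect product `Y ⋊ Wᵛ`: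
`π^λ w · π^μ v = π^{λ + w μ} (w v)`. -/
def mulA (a b : Y × AddAut X) : Y × AddAut X := (a.1 + D.actY a.2 b.1, a.2 * b.2)

/-- One step `x < x·s_{β[n]}` of the affine Bruhat order on `W⁺`, for `β ∈ Φ₊`, `n ∈ ℤ`,
requiring both elements to lie in `W⁺` and `x(β[n]) ∈ Φᵃ₊`. -/
def astep (a b : Y × AddAut X) : Prop :=
  a.1 ∈ D.Yplus ∧ b.1 ∈ D.Yplus ∧ a.2 ∈ D.Wg ∧ b.2 ∈ D.Wg ∧
    ∃ g ∈ D.PhiPos, ∃ m : ℤ,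
      D.affAct a (aroot (X := X) g m) ∈ D.PhiAffPos ∧ b = D.mulA a (D.saff g m)

/-- The (strict) affine Bruhat order on `W⁺`. -/
def alt : (Y × AddAut X) → (Y × AddAut X) → Prop := Relation.TransGen D.astep

/-- The affine Bruhat order on `W⁺`. -/
def ale (a b : Y × AddAut X) : Prop := a = b ∨ D.alt a b

/-- `b` covers `a` for the affine Bruhat order: `a < b` and nothing lies strictly
between them. -/
def acovers (a b : Y × AddAut X) : Prop :=
  D.alt a b ∧ ∀ c, D.alt a c → D.alt c b → False

/-- `Λ` is a family of fundamental weights: `⟨αv i, Λ j⟩ = δ_{ij}`. -/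
def IsFundWeights (Λ : I → X) : Prop :=
  ∀ i j, D.pr (D.αv i) (Λ j) = if i = j then 1 else 0

/-- The height `ht(λ) = ⟨λ, ρ⟩` where `ρ = Σ_i Λ_i`. -/
def ht (Λ : I → X) (l : Y) : ℤ := D.pr l (∑ i, Λ i)

/-- The affine length `ℓᵃ` with integral values. -/
noncomputable def alen (Λ : I → X) (a : Y × AddAut X) : ℤ :=
  2 * D.ht Λ (D.dompp a.1) +
    ((({x | x ∈ D.invSet a.2⁻¹ ∧ 0 ≤ D.pr a.1 x}).ncard : ℤ) -
      (({x | x ∈ D.invSet a.2⁻¹ ∧ D.pr a.1 x < 0}).ncard : ℤ))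


section Aux1
variable {I X Y : Type*} [Fintype I] [AddCommGroup X] [AddCommGroup Y] (D : KM I X Y)

lemma pr_add_left (y z : Y) (x : X) : D.pr (y + z) x = D.pr y x + D.pr z x := by
  simp [pr]

lemma pr_zsmul_left (k : ℤ) (y : Y) (x : X) : D.pr (k • y) x = k * D.pr y x := by
  simp [pr]

lemma pr_neg_left (y : Y) (x : X) : D.pr (-y) x = -D.pr y x := by simp [pr]

lemma pr_sub_left (y z : Y) (x : X) : D.pr (y - z) x = D.pr y x - D.pr z x := by
  simp [pr]

lemma pr_add_right (y : Y) (x x' : X) : D.pr y (x + x') = D.pr y x + D.pr y x' := by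
  simp [pr]

lemma pr_zsmul_right (y : Y) (k : ℤ) (x : X) : D.pr y (k • x) = k * D.pr y x := by
  simp [pr]

lemma pr_neg_right (y : Y) (x : X) : D.pr y (-x) = -D.pr y x := by simp [pr]

lemma pr_av_a (i j : I) : D.pr (D.αv i) (D.α j) = D.A i j := D.pair_av_a i j

lemma y_ext {y z : Y} (h : ∀ x, D.pr y x = D.pr z x) : y = z := by
  have : D.pairE y = D.pairE z := AddMonoidHom.ext h
  exact D.pairE.injective this

lemma sX_apply (i : I) (x : X) : D.sX i x = x - D.pr (D.αv i) x • D.α i := rfl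

lemma sX_sX (i : I) (x : X) : D.sX i (D.sX i x) = x := D.sX_invol i x

lemma sX_mul_self (i : I) : D.sX i * D.sX i = 1 := by
  ext x
  show D.sX i (D.sX i x) = x
  exact D.sX_sX i x

lemma sX_inv (i : I) : (D.sX i)⁻¹ = D.sX i :=
  inv_eq_of_mul_eq_one_right (D.sX_mul_self i)

lemma pr_actY (f : AddAut X) (y : Y) (x : X) :
    D.pr (D.actY f y) x = D.pr y (f⁻¹ x) := by
  simp [pr, actY]
  rfl

lemma actY_one (y : Y) : D.actY 1 y = y := by
  apply D.y_ext; intro x; rw [D.pr_actY]; rfl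

lemma actY_mul (f g : AddAut X) (y : Y) : D.actY (f * g) y = D.actY f (D.actY g y) := by
  apply D.y_ext; intro x
  rw [D.pr_actY, D.pr_actY, D.pr_actY]
  rfl

lemma actY_add (f : AddAut X) (y z : Y) : D.actY f (y + z) = D.actY f y + D.actY f z := by
  apply D.y_ext; intro x
  rw [D.pr_actY, D.pr_add_left, D.pr_add_left, D.pr_actY, D.pr_actY]

lemma actY_zsmul (f : AddAut X) (k : ℤ) (y : Y) : D.actY f (k • y) = k • D.actY f y := by
  apply D.y_ext; intro x
  rw [D.pr_actY, D.pr_zsmul_left, D.pr_zsmul_left, D.pr_actY]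

lemma actY_sub (f : AddAut X) (y z : Y) : D.actY f (y - z) = D.actY f y - D.actY f z := by
  apply D.y_ext; intro x
  rw [D.pr_actY, D.pr_sub_left, D.pr_sub_left, D.pr_actY, D.pr_actY]

lemma pr_actY_apply (f : AddAut X) (y : Y) (x : X) :
    D.pr (D.actY f y) (f x) = D.pr y x := by
  rw [D.pr_actY]
  congr 1
  exact f.symm_apply_apply x

lemma pr_sub_right (y : Y) (x x' : X) : D.pr y (x - x') = D.pr y x - D.pr y x' := by
  simp [pr]

lemma actY_sX (i : I) (y : Y) : D.actY (D.sX i) y = y - D.pr y (D.α i) • D.αv i := by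
  apply D.y_ext; intro x
  rw [D.pr_actY, D.sX_inv, D.sX_apply, D.pr_sub_left, D.pr_zsmul_left,
    D.pr_sub_right, D.pr_zsmul_right]
  ring

end Aux1

section Aux2
variable {I X Y : Type*} [Fintype I] [AddCommGroup X] [AddCommGroup Y] (D : KM I X Y)

/-- The nonnegative cone spanned by the simple roots. -/
def cone : Set X := {x | ∃ c : I → ℕ, x = ∑ k, (c k : ℤ) • D.α k}

lemma alpha_mem_cone (i : I) : D.α i ∈ D.cone := by
  refine ⟨fun k => if k = i then 1 else 0, ?_⟩
  rw [Finset.sum_eq_single i]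
  · simp
  · intro k _ hk; simp [hk]
  · intro h; exact absurd (Finset.mem_univ i) h

lemma cone_comb {v w : X} (hv : v ∈ D.cone) (hw : w ∈ D.cone) {x y : ℤ}
    (hx : 0 ≤ x) (hy : 0 ≤ y) : x • v + y • w ∈ D.cone := by
  obtain ⟨c, rfl⟩ := hv
  obtain ⟨d, rfl⟩ := hw
  refine ⟨fun k => (x * c k + y * d k).toNat, ?_⟩
  rw [Finset.smul_sum, Finset.smul_sum, ← Finset.sum_add_distrib]
  apply Finset.sum_congr rfl
  intro k _
  rw [smul_smul, smul_smul, ← add_smul]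
  congr 1
  rw [Int.toNat_of_nonneg]
  positivity

lemma mem_cone_iff {x : X} : x ∈ D.cone ↔ ∃ c : I → ℤ, (∀ k, 0 ≤ c k) ∧ x = ∑ k, c k • D.α k := by
  constructor
  · rintro ⟨c, rfl⟩
    exact ⟨fun k => (c k : ℤ), fun k => Int.ofNat_nonneg _, rfl⟩
  · rintro ⟨c, hc, rfl⟩
    refine ⟨fun k => (c k).toNat, ?_⟩
    apply Finset.sum_congr rfl
    intro k _
    rw [Int.toNat_of_nonneg (hc k)]

/-- Uniqueness of coefficients. -/
lemma coeff_eq {c d : I → ℤ} (h : ∑ k, c k • D.α k = ∑ k, d k • D.α k) : c = d := by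
  have h2 : ∑ k, (c k - d k) • D.α k = 0 := by
    simp only [sub_smul, Finset.sum_sub_distrib, h, sub_self]
  have := Fintype.linearIndependent_iff.mp D.indep_α (fun k => c k - d k) h2
  funext k
  have h3 : c k - d k = 0 := this k
  omega

lemma word_reverse (l : List I) : ((l.reverse).map D.sX).prod = ((l.map D.sX).prod)⁻¹ := by
  induction l with
  | nil => simp
  | cons a l ih =>
      rw [List.reverse_cons, List.map_append, List.prod_append, List.map_cons, List.map_nil,
        List.prod_cons, List.prod_nil, mul_one, ih, List.map_cons, List.prod_cons,
        mul_inv_rev, D.sX_inv]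

lemma word_mem_Wg (l : List I) : (l.map D.sX).prod ∈ D.Wg := by
  induction l with
  | nil => exact Subgroup.one_mem _
  | cons a l ih =>
      rw [List.map_cons, List.prod_cons]
      exact Subgroup.mul_mem _ (Subgroup.subset_closure ⟨a, rfl⟩) ih

lemma mem_Wg_iff {w : AddAut X} : w ∈ D.Wg ↔ ∃ l : List I, (l.map D.sX).prod = w := by
  constructor
  · intro hw
    induction hw using Subgroup.closure_induction with
    | mem x hx =>
        obtain ⟨i, rfl⟩ := hx
        exact ⟨[i], by simp⟩
    | one => exact ⟨[], by simp⟩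
    | mul x y _ _ hx hy =>
        obtain ⟨l1, rfl⟩ := hx
        obtain ⟨l2, rfl⟩ := hy
        exact ⟨l1 ++ l2, by simp⟩
    | inv x _ hx =>
        obtain ⟨l, rfl⟩ := hx
        exact ⟨l.reverse, D.word_reverse l⟩
  · rintro ⟨l, rfl⟩
    exact D.word_mem_Wg l

/-- Word length. -/
noncomputable def lenw (w : AddAut X) : ℕ :=
  sInf {n | ∃ l : List I, (l.map D.sX).prod = w ∧ l.length = n}

lemma lenw_le {w : AddAut X} {l : List I} (h : (l.map D.sX).prod = w) :
    D.lenw w ≤ l.length := Nat.sInf_le ⟨l, h, rfl⟩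

lemma lenw_spec {w : AddAut X} (hw : w ∈ D.Wg) :
    ∃ l : List I, (l.map D.sX).prod = w ∧ l.length = D.lenw w := by
  obtain ⟨l, hl⟩ := D.mem_Wg_iff.mp hw
  exact Nat.sInf_mem (⟨l.length, l, hl, rfl⟩ : {n | ∃ l : List I, (l.map D.sX).prod = w ∧ l.length = n}.Nonempty)

lemma lenw_eq_zero {w : AddAut X} (hw : w ∈ D.Wg) (h : D.lenw w = 0) : w = 1 := by
  obtain ⟨l, hl, hlen⟩ := D.lenw_spec hw
  rw [h, List.length_eq_zero_iff] at hlen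
  subst hlen
  simpa using hl.symm

lemma lenw_mul_le {w v : AddAut X} (hw : w ∈ D.Wg) (hv : v ∈ D.Wg) :
    D.lenw (w * v) ≤ D.lenw w + D.lenw v := by
  obtain ⟨l1, h1, e1⟩ := D.lenw_spec hw
  obtain ⟨l2, h2, e2⟩ := D.lenw_spec hv
  have : ((l1 ++ l2).map D.sX).prod = w * v := by simp [h1, h2]
  calc D.lenw (w * v) ≤ (l1 ++ l2).length := D.lenw_le this
    _ = D.lenw w + D.lenw v := by simp [e1, e2]

lemma lenw_sX_le (i : I) : D.lenw (D.sX i) ≤ 1 := D.lenw_le (l := [i]) (by simp)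

end Aux2

section Aux3
variable {I X Y : Type*} [Fintype I] [AddCommGroup X] [AddCommGroup Y] (D : KM I X Y)

lemma alpha_mem_Phi (i : I) : D.α i ∈ D.Phi :=
  ⟨(1, i), Subgroup.one_mem _, rfl⟩

lemma Wg_map_Phi {w : AddAut X} (hw : w ∈ D.Wg) {x : X} (hx : x ∈ D.Phi) :
    w x ∈ D.Phi := by
  obtain ⟨⟨u, i⟩, hu, rfl⟩ := hx
  exact ⟨(w * u, i), Subgroup.mul_mem _ hw hu, rfl⟩

lemma zero_not_mem_Phi : (0 : X) ∉ D.Phi := by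
  rintro ⟨⟨u, i⟩, hu, h⟩
  have h0 : u (D.α i) = u 0 := by rw [map_zero]; exact h.symm
  exact D.indep_α.ne_zero i (u.injective h0)

lemma alpha_mem_PhiPos (i : I) : D.α i ∈ D.PhiPos := by
  refine ⟨D.alpha_mem_Phi i, ?_⟩
  obtain ⟨c, hc⟩ := D.alpha_mem_cone i
  exact ⟨c, hc⟩

lemma mem_PhiPos_iff {x : X} : x ∈ D.PhiPos ↔ x ∈ D.Phi ∧ x ∈ D.cone := Iff.rfl

lemma word_map_span (l : List I) {x : X}
    (hx : x ∈ Submodule.span ℤ (Set.range D.α)) :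
    (l.map D.sX).prod x ∈ Submodule.span ℤ (Set.range D.α) := by
  induction l with
  | nil => exact hx
  | cons a l ih =>
      rw [List.map_cons, List.prod_cons]
      have : (D.sX a * (l.map D.sX).prod) x = D.sX a ((l.map D.sX).prod x) := rfl
      rw [this, D.sX_apply]
      exact sub_mem ih (Submodule.smul_mem _ _ (Submodule.subset_span ⟨a, rfl⟩))

lemma Wg_map_span {w : AddAut X} (hw : w ∈ D.Wg) {x : X}
    (hx : x ∈ Submodule.span ℤ (Set.range D.α)) :
    w x ∈ Submodule.span ℤ (Set.range D.α) := by
  obtain ⟨l, rfl⟩ := D.mem_Wg_iff.mp hw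
  exact D.word_map_span l hx

/-- A real root proportional to a simple root is `±` that simple root. -/
lemma root_smul_alpha {i : I} {c : ℤ} {x : X} (hx : x ∈ D.Phi) (h : x = c • D.α i) :
    c = 1 ∨ c = -1 := by
  obtain ⟨⟨u, l⟩, hu, rfl⟩ := hx
  have h1 : D.α l = c • u⁻¹ (D.α i) := by
    have := congrArg (u⁻¹ : AddAut X) h
    rwa [show (u⁻¹ : AddAut X) (u (D.α l)) = D.α l from u.symm_apply_apply _, map_zsmul] at this
  have h2 : u⁻¹ (D.α i) ∈ Submodule.span ℤ (Set.range D.α) :=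
    D.Wg_map_span (Subgroup.inv_mem _ hu) (Submodule.subset_span ⟨i, rfl⟩)
  obtain ⟨g, hg⟩ := (Submodule.mem_span_range_iff_exists_fun ℤ).mp h2
  have hδ : D.α l = ∑ k, ((if k = l then (1:ℤ) else 0)) • D.α k := by
    rw [Finset.sum_eq_single l]
    · simp
    · intro k _ hk; simp [hk]
    · intro h; exact absurd (Finset.mem_univ l) h
  have hcg : D.α l = ∑ k, (c * g k) • D.α k := by
    rw [h1, ← hg, Finset.smul_sum]
    apply Finset.sum_congr rfl
    intro k _
    rw [smul_smul]
  have h4 := congrFun (D.coeff_eq (hδ.symm.trans hcg)) l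
  simp only [if_pos rfl] at h4
  have h5 : IsUnit c := IsUnit.of_mul_eq_one (g l) h4.symm
  exact Int.isUnit_iff.mp h5

end Aux3

section Aux4
set_option linter.unusedSectionVars false
variable {I X Y : Type*} [Fintype I] [AddCommGroup X] [AddCommGroup Y] (D : KM I X Y)

/-- Letters of the alternating word ending in `s_j` (read right-to-left). -/
def clet (i j : I) (t : ℕ) : I := if t % 2 = 0 then j else i

/-- Letters of the alternating word ending in `s_i`. -/
def dlet (i j : I) (t : ℕ) : I := if t % 2 = 0 then i else j

lemma clet_succ (i j : I) (t : ℕ) : clet i j (t + 1) = dlet i j t := by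
  simp only [clet, dlet, Nat.add_mod_right]
  rcases Nat.even_or_odd t with h | h
  · have h0 : t % 2 = 0 := Nat.even_iff.mp h
    have h1 : (t+1) % 2 = 1 := by omega
    simp [h0, h1]
  · have h0 : t % 2 = 1 := Nat.odd_iff.mp h
    have h1 : (t+1) % 2 = 0 := by omega
    simp [h0, h1]

lemma dlet_succ (i j : I) (t : ℕ) : dlet i j (t + 1) = clet i j t := by
  simp only [clet, dlet]
  rcases Nat.even_or_odd t with h | h
  · have h0 : t % 2 = 0 := Nat.even_iff.mp h
    have h1 : (t+1) % 2 = 1 := by omega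
    simp [h0, h1]
  · have h0 : t % 2 = 1 := Nat.odd_iff.mp h
    have h1 : (t+1) % 2 = 0 := by omega
    simp [h0, h1]

/-- Alternating word of length `t` ending (rightmost) in `s_j`. -/
def altA (i j : I) : ℕ → AddAut X
  | 0 => 1
  | (t+1) => D.sX (clet i j t) * altA i j t

/-- Alternating word of length `t` ending (rightmost) in `s_i`. -/
def altB (i j : I) : ℕ → AddAut X
  | 0 => 1
  | (t+1) => D.sX (dlet i j t) * altB i j t

lemma altA_mul_sXi (i j : I) (t : ℕ) : D.altA i j t * D.sX i = D.altB i j (t + 1) := by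
  induction t with
  | zero => simp [altA, altB, dlet]
  | succ t ih =>
      show D.sX (clet i j t) * D.altA i j t * D.sX i = D.sX (dlet i j (t+1)) * D.altB i j (t+1)
      rw [mul_assoc, ih, dlet_succ]

lemma altA_word (i j : I) (t : ℕ) :
    ∃ l : List I, (l.map D.sX).prod = D.altA i j t ∧ l.length = t := by
  induction t with
  | zero => exact ⟨[], by simp [altA], rfl⟩
  | succ t ih =>
      obtain ⟨l, hl, hlen⟩ := ih
      exact ⟨clet i j t :: l, by simp [altA, hl], by simp [hlen]⟩

lemma altB_word (i j : I) (t : ℕ) :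
    ∃ l : List I, (l.map D.sX).prod = D.altB i j t ∧ l.length = t := by
  induction t with
  | zero => exact ⟨[], by simp [altB], rfl⟩
  | succ t ih =>
      obtain ⟨l, hl, hlen⟩ := ih
      exact ⟨dlet i j t :: l, by simp [altB, hl], by simp [hlen]⟩

/-- Coordinates of `altA t (α i)` in the plane spanned by `α i, α j`. -/
def vseq (a b : ℤ) : ℕ → ℤ × ℤ
  | 0 => (1, 0)
  | (t+1) =>
      let v := vseq a b t
      if t % 2 = 0 then (v.1, b * v.1 - v.2) else (a * v.2 - v.1, v.2)

lemma sX_comb_i (i j : I) (hij : i ≠ j) (x y : ℤ) :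
    D.sX i (x • D.α i + y • D.α j) = ((-D.A i j) * y - x) • D.α i + y • D.α j := by
  rw [sX_apply, pr_add_right, pr_zsmul_right, pr_zsmul_right, pr_av_a, pr_av_a, D.A_diag]
  module

lemma sX_comb_j (i j : I) (hij : i ≠ j) (x y : ℤ) :
    D.sX j (x • D.α i + y • D.α j) = x • D.α i + ((-D.A j i) * x - y) • D.α j := by
  rw [sX_apply, pr_add_right, pr_zsmul_right, pr_zsmul_right, pr_av_a, pr_av_a, D.A_diag]
  module

lemma altA_alpha (i j : I) (hij : i ≠ j) (t : ℕ) :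
    D.altA i j t (D.α i) =
      (vseq (-D.A i j) (-D.A j i) t).1 • D.α i + (vseq (-D.A i j) (-D.A j i) t).2 • D.α j := by
  induction t with
  | zero =>
      show D.α i = (1:ℤ) • D.α i + (0:ℤ) • D.α j
      module
  | succ t ih =>
      show D.sX (clet i j t) (D.altA i j t (D.α i)) = _
      rw [ih]
      rcases Nat.even_or_odd t with h | h
      · have h0 : t % 2 = 0 := Nat.even_iff.mp h
        rw [show clet i j t = j from by simp [clet, h0], D.sX_comb_j i j hij]
        simp only [vseq, h0]
        norm_num
      · have h0 : t % 2 = 1 := Nat.odd_iff.mp h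
        rw [show clet i j t = i from by simp [clet, h0], D.sX_comb_i i j hij]
        simp only [vseq, h0]
        norm_num

/-- In the infinite dihedral case all coordinates stay nonnegative. -/
lemma vseq_nonneg {a b : ℤ} (ha : 0 ≤ a) (hb : 0 ≤ b) (hab : 4 ≤ a * b) (t : ℕ) :
    0 ≤ (vseq a b t).1 ∧ 0 ≤ (vseq a b t).2 ∧
      (if t % 2 = 0 then 2 * (vseq a b t).2 ≤ b * (vseq a b t).1
       else 2 * (vseq a b t).1 ≤ a * (vseq a b t).2) := by
  induction t with
  | zero =>
      refine ⟨by simp [vseq], by simp [vseq], ?_⟩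
      simp only [vseq]
      norm_num
      omega
  | succ t ih =>
      obtain ⟨hx, hy, hI⟩ := ih
      rcases Nat.even_or_odd t with h | h
      · have h0 : t % 2 = 0 := Nat.even_iff.mp h
        have h1 : (t+1) % 2 = 1 := by omega
        rw [if_pos h0] at hI
        simp only [vseq, h0, if_pos rfl, h1]
        norm_num
        refine ⟨hx, by nlinarith, by nlinarith⟩
      · have h0 : t % 2 = 1 := Nat.odd_iff.mp h
        have h1 : (t+1) % 2 = 0 := by omega
        rw [if_neg (by omega)] at hI
        simp only [vseq, h0, h1]
        norm_num
        refine ⟨by nlinarith, hy, by nlinarith⟩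

end Aux4

section Aux5
set_option linter.unusedSectionVars false
set_option maxHeartbeats 1000000
variable {I X Y : Type*} [Fintype I] [AddCommGroup X] [AddCommGroup Y] (D : KM I X Y)

lemma altB_m_succ (i j : I) (m : ℕ) (hm : 1 ≤ m)
    (hbraid : D.altA i j m = D.altB i j m) :
    D.altB i j (m + 1) = D.altA i j (m - 1) := by
  obtain ⟨k, rfl⟩ : ∃ k, m = k + 1 := ⟨m - 1, by omega⟩
  show D.sX (dlet i j (k+1)) * D.altB i j (k+1) = _
  rw [← hbraid]
  show D.sX (dlet i j (k+1)) * (D.sX (clet i j k) * D.altA i j k) = _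
  rw [dlet_succ, ← mul_assoc, D.sX_mul_self, one_mul]
  rfl

lemma shorten (i j : I) (m : ℕ) (hm : 1 ≤ m)
    (hbraid : D.altA i j m = D.altB i j m) :
    ∀ t, m ≤ t → ∃ l : List I, l.length + 2 = t + 1 ∧ (l.map D.sX).prod = D.altB i j (t + 1) := by
  intro t htm
  induction t with
  | zero => omega
  | succ t ih =>
      rcases Nat.lt_or_ge m (t + 1) with h | h
      · obtain ⟨l, hlen, hl⟩ := ih (by omega)
        refine ⟨dlet i j (t+1) :: l, by simp; omega, ?_⟩
        rw [List.map_cons, List.prod_cons, hl]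
        rfl
      · have : m = t + 1 := by omega
        subst this
        obtain ⟨l, hl, hlen⟩ := D.altA_word i j (t + 1 - 1)
        refine ⟨l, by omega, ?_⟩
        rw [hl, D.altB_m_succ i j (t+1) hm hbraid]

/-- The rank-2 dichotomy in the finite dihedral cases, given the braid relation. -/
lemma DL_finite (i j : I) (hij : i ≠ j) (m : ℕ) (hm : 1 ≤ m)
    (hbraid : D.altA i j m = D.altB i j m)
    (hsmall : ∀ t, 1 ≤ t → t ≤ m - 1 →
      0 ≤ (vseq (-D.A i j) (-D.A j i) t).1 ∧ 0 ≤ (vseq (-D.A i j) (-D.A j i) t).2)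
    (t : ℕ) (ht : 1 ≤ t) :
    (∃ x y : ℤ, 0 ≤ x ∧ 0 ≤ y ∧ D.altA i j t (D.α i) = x • D.α i + y • D.α j) ∨
    (∃ l : List I, l.length + 1 ≤ t ∧ (l.map D.sX).prod = D.altA i j t * D.sX i) := by
  rcases le_or_gt t (m - 1) with h | h
  · left
    exact ⟨_, _, (hsmall t ht h).1, (hsmall t ht h).2, D.altA_alpha i j hij t⟩
  · right
    obtain ⟨l, hlen, hl⟩ := D.shorten i j m hm hbraid t (by omega)
    exact ⟨l, by omega, by rw [hl, D.altA_mul_sXi]⟩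

/-- The rank-2 dichotomy: either `altA t (α i)` has nonnegative coordinates, or
`altA t * s_i` is a word of length `< t`. -/
lemma DL (i j : I) (hij : i ≠ j) (t : ℕ) (ht : 1 ≤ t) :
    (∃ x y : ℤ, 0 ≤ x ∧ 0 ≤ y ∧ D.altA i j t (D.α i) = x • D.α i + y • D.α j) ∨
    (∃ l : List I, l.length + 1 ≤ t ∧ (l.map D.sX).prod = D.altA i j t * D.sX i) := by
  have ha : D.A i j ≤ 0 := D.A_offdiag i j hij
  have hb : D.A j i ≤ 0 := D.A_offdiag j i (Ne.symm hij)
  rcases le_or_gt 4 ((-D.A i j) * (-D.A j i)) with hab | hab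
  · left
    obtain ⟨h1, h2, _⟩ := vseq_nonneg (by omega) (by omega) hab t
    exact ⟨_, _, h1, h2, D.altA_alpha i j hij t⟩
  · -- finite dihedral cases
    have hz1 : D.A i j = 0 → D.A j i = 0 := D.A_zero_iff i j
    have hz2 : D.A j i = 0 → D.A i j = 0 := D.A_zero_iff j i
    have hbound : -3 ≤ D.A i j ∧ -3 ≤ D.A j i := by
      constructor <;> by_contra h <;> push_neg at h
      · have hb1 : D.A j i = 0 := by nlinarith
        have := hz2 hb1; omega
      · have ha1 : D.A i j = 0 := by nlinarith
        have := hz1 ha1; omega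
    have hcase : (D.A i j = 0 ∧ D.A j i = 0) ∨ (D.A i j = -1 ∧ D.A j i = -1) ∨
        (D.A i j = -1 ∧ D.A j i = -2) ∨ (D.A i j = -2 ∧ D.A j i = -1) ∨
        (D.A i j = -1 ∧ D.A j i = -3) ∨ (D.A i j = -3 ∧ D.A j i = -1) := by
      have h1 : D.A i j = 0 ∨ D.A i j = -1 ∨ D.A i j = -2 ∨ D.A i j = -3 := by omega
      have h2 : D.A j i = 0 ∨ D.A j i = -1 ∨ D.A j i = -2 ∨ D.A j i = -3 := by omega
      rcases h1 with h1 | h1 | h1 | h1 <;> rcases h2 with h2 | h2 | h2 | h2 <;>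
        rw [h1, h2] at hab <;> simp [h1, h2] at * <;> omega
    -- per-case braid relations
    rcases hcase with ⟨h1, h2⟩ | ⟨h1, h2⟩ | ⟨h1, h2⟩ | ⟨h1, h2⟩ | ⟨h1, h2⟩ | ⟨h1, h2⟩
    · -- m = 2
      refine D.DL_finite i j hij 2 (by omega) ?_ ?_ t ht
      · ext x
        show D.sX i (D.sX j x) = D.sX j (D.sX i x)
        simp only [sX_apply, pr_sub_right, pr_zsmul_right, pr_av_a, h1, h2, D.A_diag]
        module
      · intro t ht1 ht2
        interval_cases t <;> simp [vseq, h1, h2]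
    · -- m = 3
      refine D.DL_finite i j hij 3 (by omega) ?_ ?_ t ht
      · ext x
        show D.sX j (D.sX i (D.sX j x)) = D.sX i (D.sX j (D.sX i x))
        simp only [sX_apply, pr_sub_right, pr_zsmul_right, pr_av_a, h1, h2, D.A_diag]
        module
      · intro t ht1 ht2
        interval_cases t <;> simp [vseq, h1, h2]
    · -- m = 4, (a,b) = (1,2)
      refine D.DL_finite i j hij 4 (by omega) ?_ ?_ t ht
      · ext x
        show D.sX i (D.sX j (D.sX i (D.sX j x))) = D.sX j (D.sX i (D.sX j (D.sX i x)))
        simp only [sX_apply, pr_sub_right, pr_zsmul_right, pr_av_a, h1, h2, D.A_diag]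
        module
      · intro t ht1 ht2
        interval_cases t <;> simp [vseq, h1, h2] <;> norm_num
    · -- m = 4, (a,b) = (2,1)
      refine D.DL_finite i j hij 4 (by omega) ?_ ?_ t ht
      · ext x
        show D.sX i (D.sX j (D.sX i (D.sX j x))) = D.sX j (D.sX i (D.sX j (D.sX i x)))
        simp only [sX_apply, pr_sub_right, pr_zsmul_right, pr_av_a, h1, h2, D.A_diag]
        module
      · intro t ht1 ht2
        interval_cases t <;> simp [vseq, h1, h2] <;> norm_num
    · -- m = 6, (a,b) = (1,3)
      refine D.DL_finite i j hij 6 (by omega) ?_ ?_ t ht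
      · ext x
        show D.sX i (D.sX j (D.sX i (D.sX j (D.sX i (D.sX j x))))) =
          D.sX j (D.sX i (D.sX j (D.sX i (D.sX j (D.sX i x)))))
        simp only [sX_apply, pr_sub_right, pr_zsmul_right, pr_av_a, h1, h2, D.A_diag]
        module
      · intro t ht1 ht2
        interval_cases t <;> simp [vseq, h1, h2] <;> norm_num
    · -- m = 6, (a,b) = (3,1)
      refine D.DL_finite i j hij 6 (by omega) ?_ ?_ t ht
      · ext x
        show D.sX i (D.sX j (D.sX i (D.sX j (D.sX i (D.sX j x))))) =
          D.sX j (D.sX i (D.sX j (D.sX i (D.sX j (D.sX i x)))))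
        simp only [sX_apply, pr_sub_right, pr_zsmul_right, pr_av_a, h1, h2, D.A_diag]
        module
      · intro t ht1 ht2
        interval_cases t <;> simp [vseq, h1, h2] <;> norm_num

end Aux5

section Aux6
set_option linter.unusedSectionVars false
set_option maxHeartbeats 1000000
variable {I X Y : Type*} [Fintype I] [AddCommGroup X] [AddCommGroup Y] (D : KM I X Y)

lemma lenw_altA_le (i j : I) (t : ℕ) : D.lenw (D.altA i j t) ≤ t := by
  obtain ⟨l, hl, hlen⟩ := D.altA_word i j t
  calc D.lenw (D.altA i j t) ≤ l.length := D.lenw_le hl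
    _ = t := hlen

lemma altA_mem_Wg (i j : I) (t : ℕ) : D.altA i j t ∈ D.Wg := by
  obtain ⟨l, hl, _⟩ := D.altA_word i j t
  exact hl ▸ D.word_mem_Wg l

lemma lenw_altA_inv_le (i j : I) (t : ℕ) : D.lenw (D.altA i j t)⁻¹ ≤ t := by
  obtain ⟨l, hl, hlen⟩ := D.altA_word i j t
  have : ((l.reverse).map D.sX).prod = (D.altA i j t)⁻¹ := by rw [D.word_reverse, hl]
  calc D.lenw (D.altA i j t)⁻¹ ≤ l.reverse.length := D.lenw_le this
    _ = t := by simp [hlen]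

lemma altA_inv_succ (i j : I) (t : ℕ) :
    (D.altA i j (t+1))⁻¹ = (D.altA i j t)⁻¹ * D.sX (clet i j t) := by
  show (D.sX (clet i j t) * D.altA i j t)⁻¹ = _
  rw [mul_inv_rev, D.sX_inv]

/-- Main positivity theorem: if `ℓ(w sᵢ) ≥ ℓ(w)` then `w(αᵢ)` lies in the positive cone. -/
lemma MT : ∀ n : ℕ, ∀ w : AddAut X, w ∈ D.Wg → D.lenw w ≤ n → ∀ i : I,
    D.lenw w ≤ D.lenw (w * D.sX i) → w (D.α i) ∈ D.cone := by
  intro n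
  induction n with
  | zero =>
      intro w hw h0 i _
      have hw1 : w = 1 := D.lenw_eq_zero hw (by omega)
      subst hw1
      exact D.alpha_mem_cone i
  | succ n ih =>
      intro w hw hn i hi
      rcases le_or_gt (D.lenw w) n with h | h
      · exact ih w hw h i hi
      have hlen : D.lenw w = n + 1 := by omega
      obtain ⟨l, hl, hlenl⟩ := D.lenw_spec hw
      have hlne : l ≠ [] := by
        intro h0
        rw [h0] at hlenl
        simp at hlenl
        omega
      obtain ⟨l', j, rfl⟩ := (List.eq_nil_or_concat' l).resolve_left hlne
      have hl'len : l'.length = n := by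
        have := hlenl
        simp at this
        omega
      have hwsj : D.lenw (w * D.sX j) ≤ n := by
        have hprod : ((l').map D.sX).prod = w * D.sX j := by
          have h5 : ((l' ++ [j]).map D.sX).prod = w := hl
          rw [List.map_append, List.prod_append] at h5
          simp only [List.map_cons, List.map_nil, List.prod_cons, List.prod_nil, mul_one] at h5
          rw [← h5, mul_assoc, D.sX_mul_self, mul_one]
        calc D.lenw (w * D.sX j) ≤ l'.length := D.lenw_le hprod
          _ ≤ n := by omega
      have hij : i ≠ j := by
        rintro rfl
        omega
      -- the decreasing alternating chain
      set P : ℕ → Prop := fun t => D.lenw (w * (D.altA i j t)⁻¹) + t ≤ D.lenw w with hP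
      have hP1 : P 1 := by
        have hA1 : D.altA i j 1 = D.sX j := by
          show D.sX (clet i j 0) * 1 = D.sX j
          rw [mul_one]; rfl
        simp only [hP, hA1, D.sX_inv]
        omega
      set t0 := Nat.findGreatest P (n+1) with ht0
      have hPt0 : P t0 := Nat.findGreatest_spec (m := 1) (by omega) hP1
      have ht0ge1 : 1 ≤ t0 := Nat.le_findGreatest (by omega) hP1
      set v := w * (D.altA i j t0)⁻¹ with hv
      have hvmem : v ∈ D.Wg := Subgroup.mul_mem _ hw (Subgroup.inv_mem _ (D.altA_mem_Wg i j t0))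
      have hw_eq : w = v * D.altA i j t0 := by rw [hv, inv_mul_cancel_right]
      have h_up : D.lenw w ≤ D.lenw v + t0 := by
        have step := D.lenw_mul_le hvmem (D.altA_mem_Wg i j t0)
        rw [← hw_eq] at step
        have := D.lenw_altA_le i j t0
        omega
      have hlv : D.lenw v + t0 = D.lenw w := le_antisymm hPt0 h_up
      -- length goes up at the next step
      have hnext : D.lenw v ≤ D.lenw (v * D.sX (clet i j t0)) := by
        have hvnext : v * D.sX (clet i j t0) = w * (D.altA i j (t0+1))⁻¹ := by
          rw [hv, D.altA_inv_succ, ← mul_assoc]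
        rcases le_or_gt (t0 + 1) (n + 1) with hle | hgt
        · have hnP : ¬ P (t0 + 1) := Nat.findGreatest_is_greatest (by omega) hle
          simp only [hP] at hnP
          rw [hvnext]
          omega
        · -- t0 = n + 1, so lenw v = 0
          have : D.lenw v = 0 := by omega
          omega
      -- length goes up at the previous step
      have hprev : D.lenw v ≤ D.lenw (v * D.sX (clet i j (t0-1))) := by
        obtain ⟨k, hk⟩ : ∃ k, t0 = k + 1 := ⟨t0 - 1, by omega⟩
        have hvprev : v * D.sX (clet i j (t0-1)) = w * (D.altA i j (t0-1))⁻¹ := by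
          rw [hv, hk]
          simp only [Nat.add_sub_cancel]
          rw [D.altA_inv_succ, ← mul_assoc, mul_assoc _ (D.sX _) (D.sX _), D.sX_mul_self,
            mul_one]
        have hlow : D.lenw w ≤ D.lenw (w * (D.altA i j (t0-1))⁻¹) + (t0 - 1) := by
          have step := D.lenw_mul_le
            (Subgroup.mul_mem _ hw (Subgroup.inv_mem _ (D.altA_mem_Wg i j (t0-1))))
            (D.altA_mem_Wg i j (t0-1))
          rw [inv_mul_cancel_right] at step
          have := D.lenw_altA_le i j (t0-1)
          omega
        rw [hvprev]
        omega
      -- both simple reflections increase the length of v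
      have hvi : D.lenw v ≤ D.lenw (v * D.sX i) := by
        rcases Nat.even_or_odd t0 with hpar | hpar
        · have : clet i j (t0 - 1) = i := by
            have h1 : (t0 - 1) % 2 = 1 := by
              have := Nat.even_iff.mp hpar; omega
            simp [clet, h1]
          rwa [this] at hprev
        · have : clet i j t0 = i := by
            have h1 : t0 % 2 = 1 := Nat.odd_iff.mp hpar
            simp [clet, h1]
          rwa [this] at hnext
      have hvj : D.lenw v ≤ D.lenw (v * D.sX j) := by
        rcases Nat.even_or_odd t0 with hpar | hpar
        · have : clet i j t0 = j := by
            have h1 : t0 % 2 = 0 := Nat.even_iff.mp hpar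
            simp [clet, h1]
          rwa [this] at hnext
        · have : clet i j (t0 - 1) = j := by
            have h1 : (t0 - 1) % 2 = 0 := by
              have := Nat.odd_iff.mp hpar; omega
            simp [clet, h1]
          rwa [this] at hprev
      have hlvn : D.lenw v ≤ n := by omega
      have hconei : v (D.α i) ∈ D.cone := ih v hvmem hlvn i hvi
      have hconej : v (D.α j) ∈ D.cone := ih v hvmem hlvn j hvj
      rcases D.DL i j hij t0 ht0ge1 with ⟨x, y, hx, hy, heq⟩ | ⟨lw, hlw, hlweq⟩
      · have : w (D.α i) = x • v (D.α i) + y • v (D.α j) := by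
          rw [hw_eq]
          show v (D.altA i j t0 (D.α i)) = _
          rw [heq, map_add, map_zsmul, map_zsmul]
        rw [this]
        exact D.cone_comb hconei hconej hx hy
      · exfalso
        have hws : w * D.sX i = v * (lw.map D.sX).prod := by
          rw [hlweq, hw_eq, mul_assoc]
        have step := D.lenw_mul_le hvmem (D.word_mem_Wg lw)
        rw [← hws] at step
        have := D.lenw_le (l := lw) (w := (lw.map D.sX).prod) rfl
        omega

lemma sX_alpha_self (i : I) : D.sX i (D.α i) = -(D.α i) := by
  rw [sX_apply, pr_av_a, D.A_diag]
  module

/-- Every real root is in the positive or negative cone. -/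
lemma root_sign {w : AddAut X} (hw : w ∈ D.Wg) (i : I) :
    w (D.α i) ∈ D.cone ∨ -(w (D.α i)) ∈ D.cone := by
  rcases le_or_gt (D.lenw w) (D.lenw (w * D.sX i)) with h | h
  · exact Or.inl (D.MT (D.lenw w) w hw le_rfl i h)
  · right
    have hmem : w * D.sX i ∈ D.Wg := Subgroup.mul_mem _ hw (Subgroup.subset_closure ⟨i, rfl⟩)
    have hself : (w * D.sX i) * D.sX i = w := by
      rw [mul_assoc, D.sX_mul_self, mul_one]
    have h2 : D.lenw (w * D.sX i) ≤ D.lenw ((w * D.sX i) * D.sX i) := by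
      rw [hself]; omega
    have := D.MT (D.lenw (w * D.sX i)) (w * D.sX i) hmem le_rfl i h2
    have heq : (w * D.sX i) (D.α i) = -(w (D.α i)) := by
      show w (D.sX i (D.α i)) = _
      rw [D.sX_alpha_self, map_neg]
    rwa [heq] at this

end Aux6

section Aux7
set_option linter.unusedSectionVars false
set_option maxHeartbeats 1000000
variable {I X Y : Type*} [Fintype I] [AddCommGroup X] [AddCommGroup Y] (D : KM I X Y)

lemma sX_mem_Wg (i : I) : D.sX i ∈ D.Wg := Subgroup.subset_closure ⟨i, rfl⟩

lemma Phi_pos_or_neg {x : X} (hx : x ∈ D.Phi) : x ∈ D.PhiPos ∨ x ∈ D.PhiNeg := by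
  obtain ⟨⟨u, l⟩, hu, rfl⟩ := hx
  rcases D.root_sign hu l with h | h
  · left
    refine ⟨⟨(u, l), hu, rfl⟩, ?_⟩
    obtain ⟨c, hc⟩ := h
    exact ⟨c, hc⟩
  · right
    have hPhi : -(u (D.α l)) ∈ D.Phi := by
      refine ⟨(u * D.sX l, l), Subgroup.mul_mem _ hu (D.sX_mem_Wg l), ?_⟩
      show -(u (D.α l)) = u (D.sX l (D.α l))
      rw [D.sX_alpha_self, map_neg]
    refine ⟨hPhi, ?_⟩
    obtain ⟨c, hc⟩ := h
    exact ⟨c, hc⟩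

lemma cone_eq_zero {x : X} (h1 : x ∈ D.cone) (h2 : -x ∈ D.cone) : x = 0 := by
  obtain ⟨c, hc⟩ := h1
  obtain ⟨d, hd⟩ := h2
  have hsum : ∑ k, ((c k : ℤ) + (d k : ℤ)) • D.α k = ∑ k, (0 : ℤ) • D.α k := by
    simp only [add_smul, Finset.sum_add_distrib, ← hc, ← hd, zero_smul,
      Finset.sum_const_zero]
    abel
  have := D.coeff_eq hsum
  have hc0 : ∀ k, (c k : ℤ) = 0 := by
    intro k
    have := congrFun this k
    omega
  rw [hc]
  apply Finset.sum_eq_zero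
  intro k _
  rw [hc0 k, zero_smul]

lemma not_pos_and_neg {x : X} (h1 : x ∈ D.PhiPos) (h2 : x ∈ D.PhiNeg) : False := by
  obtain ⟨c, hc⟩ := h1.2
  obtain ⟨d, hd⟩ := h2.2
  have : x = 0 := D.cone_eq_zero ⟨c, hc⟩ ⟨d, hd⟩
  rw [this] at h1
  exact D.zero_not_mem_Phi h1.1

/-- `s_i` permutes the positive roots other than `α i`. -/
lemma sX_PhiPos {i : I} {β : X} (hβ : β ∈ D.PhiPos) (hne : β ≠ D.α i) :
    D.sX i β ∈ D.PhiPos := by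
  have hmem : D.sX i β ∈ D.Phi := D.Wg_map_Phi (D.sX_mem_Wg i) hβ.1
  rcases D.Phi_pos_or_neg hmem with h | h
  · exact h
  · exfalso
    obtain ⟨c, hc⟩ := hβ.2
    obtain ⟨d, hd⟩ := h.2
    set N := D.pr (D.αv i) β with hN
    have e1 : ∑ k, ((c k : ℤ) + (d k : ℤ)) • D.α k = β + -(D.sX i β) := by
      simp only [add_smul, Finset.sum_add_distrib, ← hc, ← hd]
    have e2 : β + -(D.sX i β) = N • D.α i := by
      rw [sX_apply, ← hN]
      abel
    have hright : ∑ k, ((if k = i then N else 0) : ℤ) • D.α k = N • D.α i := by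
      rw [Finset.sum_eq_single i]
      · simp
      · intro k _ hk; simp [hk]
      · intro h; exact absurd (Finset.mem_univ i) h
    have hco := D.coeff_eq (e1.trans (e2.trans hright.symm))
    have hck : ∀ k, k ≠ i → (c k : ℤ) = 0 := by
      intro k hk
      have := congrFun hco k
      simp [hk] at this
      omega
    have hβi : β = ((c i : ℤ)) • D.α i := by
      rw [hc, Finset.sum_eq_single i]
      · intro k _ hk
        rw [hck k hk, zero_smul]
      · intro h; exact absurd (Finset.mem_univ i) h
    rcases D.root_smul_alpha hβ.1 hβi with h1 | h1
    · rw [h1, one_smul] at hβi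
      exact hne hβi
    · omega

end Aux7

section Aux8
set_option linter.unusedSectionVars false
set_option maxHeartbeats 1000000
variable {I X Y : Type*} [Fintype I] [AddCommGroup X] [AddCommGroup Y] (D : KM I X Y)

lemma invSet_finite {v : AddAut X} (hv : v ∈ D.Wg) : (D.invSet v).Finite := by
  induction hv using Subgroup.closure_induction with
  | mem x hx =>
      obtain ⟨i, rfl⟩ := hx
      apply Set.Finite.subset (Set.finite_singleton (D.α i))
      rintro β ⟨hβ, hneg⟩
      by_contra hne
      exact D.not_pos_and_neg (D.sX_PhiPos hβ hne) hneg
  | one =>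
      apply Set.Finite.subset (Set.finite_empty)
      rintro β ⟨hβ, hneg⟩
      exact absurd (D.not_pos_and_neg hβ hneg) (by simp)
  | mul v w hvm hwm ihv ihw =>
      apply Set.Finite.subset (ihw.union (ihv.image (⇑w⁻¹)))
      rintro β ⟨hβ, hneg⟩
      have hwβ : (v * w) β = v (w β) := rfl
      rcases D.Phi_pos_or_neg (D.Wg_map_Phi hwm hβ.1) with h | h
      · right
        refine ⟨w β, ⟨h, by rwa [← hwβ]⟩, ?_⟩
        exact w.symm_apply_apply β
      · left
        exact ⟨hβ, h⟩
  | inv v hvm ihv =>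
      apply Set.Finite.subset (ihv.image (fun z => -(v z)))
      rintro β ⟨hβ, hneg⟩
      refine ⟨-(v⁻¹ β), ⟨hneg, ?_⟩, ?_⟩
      · show -(v (-(v⁻¹ β))) ∈ D.PhiPos
        rw [map_neg, neg_neg]
        have : v (v⁻¹ β) = β := v.apply_symm_apply β
        rwa [this]
      · show -(v (-(v⁻¹ β))) = β
        rw [map_neg, neg_neg]
        have h9 : v (v⁻¹ β) = (v * v⁻¹) β := rfl
        rw [h9, mul_inv_cancel]
        rfl

/-- The set of positive roots negative on `y`. -/
def Nneg (y : Y) : Set X := {x | x ∈ D.PhiPos ∧ D.pr y x < 0}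

lemma pr_cone_nonneg {y : Y} (hy : y ∈ D.Ypp) {x : X} (hx : x ∈ D.cone) :
    0 ≤ D.pr y x := by
  obtain ⟨c, rfl⟩ := hx
  have : D.pr y (∑ k, (c k : ℤ) • D.α k) = ∑ k, (c k : ℤ) * D.pr y (D.α k) := by
    rw [pr, map_sum]
    apply Finset.sum_congr rfl
    intro k _
    exact D.pr_zsmul_right y _ _
  rw [this]
  apply Finset.sum_nonneg
  intro k _
  exact mul_nonneg (by positivity) (hy k)

lemma Nneg_finite_of_Yplus {y : Y} (hy : y ∈ D.Yplus) : (D.Nneg y).Finite := by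
  obtain ⟨⟨u, ν⟩, hu, hν, rfl⟩ := hy
  apply Set.Finite.subset (D.invSet_finite (Subgroup.inv_mem _ hu))
  rintro β ⟨hβ, hlt⟩
  rw [D.pr_actY] at hlt
  refine ⟨hβ, ?_⟩
  rcases D.Phi_pos_or_neg (D.Wg_map_Phi (Subgroup.inv_mem _ hu) hβ.1) with h | h
  · exact absurd (D.pr_cone_nonneg hν h.2) (by omega)
  · exact h

lemma Yplus_actY {w : AddAut X} (hw : w ∈ D.Wg) {y : Y} (hy : y ∈ D.Yplus) :
    D.actY w y ∈ D.Yplus := by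
  obtain ⟨⟨u, ν⟩, hu, hν, rfl⟩ := hy
  exact ⟨(w * u, ν), Subgroup.mul_mem _ hw hu, hν, (D.actY_mul w u ν).symm⟩

lemma Yplus_of_Nneg_finite : ∀ n : ℕ, ∀ y : Y, (D.Nneg y).Finite → (D.Nneg y).ncard = n →
    y ∈ D.Yplus := by
  intro n
  induction n using Nat.strong_induction_on with
  | _ n ih =>
      intro y hfin hcard
      by_cases hdom : ∀ i, 0 ≤ D.pr y (D.α i)
      · exact ⟨(1, y), Subgroup.one_mem _, hdom, (D.actY_one y).symm⟩
      · push_neg at hdom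
        obtain ⟨i, hi⟩ := hdom
        set y' := D.actY (D.sX i) y with hy'
        have hsXinv : ∀ z : X, (D.sX i)⁻¹ z = D.sX i z := fun z => by rw [D.sX_inv]
        have hpr' : ∀ z : X, D.pr y' z = D.pr y (D.sX i z) := by
          intro z
          rw [hy', D.pr_actY, hsXinv]
        have hmemNi : D.α i ∈ D.Nneg y := ⟨D.alpha_mem_PhiPos i, hi⟩
        have himg : D.Nneg y' = (⇑(D.sX i)) '' (D.Nneg y \ {D.α i}) := by
          ext β
          constructor
          · rintro ⟨hβ, hlt⟩
            rw [hpr'] at hlt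
            have hβne : β ≠ D.α i := by
              rintro rfl
              rw [D.sX_alpha_self, D.pr_neg_right] at hlt
              omega
            refine ⟨D.sX i β, ⟨⟨D.sX_PhiPos hβ hβne, hlt⟩, ?_⟩, D.sX_sX i β⟩
            simp only [Set.mem_singleton_iff]
            intro hEq
            have hβeq : β = D.sX i (D.α i) := by rw [← hEq, D.sX_sX]
            rw [D.sX_alpha_self] at hβeq
            have hβneg : β ∈ D.PhiNeg := by
              show -β ∈ D.PhiPos
              rw [hβeq, neg_neg]
              exact D.alpha_mem_PhiPos i
            exact D.not_pos_and_neg hβ hβneg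
          · rintro ⟨γ, ⟨⟨hγpos, hγlt⟩, hγne⟩, rfl⟩
            simp only [Set.mem_singleton_iff] at hγne
            refine ⟨D.sX_PhiPos hγpos hγne, ?_⟩
            rw [hpr', D.sX_sX]
            exact hγlt
        have hfin' : (D.Nneg y').Finite := by
          rw [himg]
          exact (hfin.diff).image _
        have hcard' : (D.Nneg y').ncard < n := by
          rw [himg, Set.ncard_image_of_injective _ (D.sX i).injective]
          have h1 : (D.Nneg y \ {D.α i}).ncard = (D.Nneg y).ncard - 1 :=
            Set.ncard_diff_singleton_of_mem hmemNi
          have h2 : 0 < (D.Nneg y).ncard := by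
            rw [Set.ncard_pos hfin]
            exact ⟨D.α i, hmemNi⟩
          omega
        have hy'plus : y' ∈ D.Yplus :=
          ih _ hcard' y' hfin' rfl
        have : D.actY (D.sX i) y' = y := by
          rw [hy', ← D.actY_mul, D.sX_mul_self, D.actY_one]
        rw [← this]
        exact D.Yplus_actY (D.sX_mem_Wg i) hy'plus

end Aux8

section Aux9
set_option linter.unusedSectionVars false
set_option maxHeartbeats 1000000
variable {I X Y : Type*} [Fintype I] [AddCommGroup X] [AddCommGroup Y] (D : KM I X Y)

lemma apply_inv_apply (w : AddAut X) (z : X) : w (w⁻¹ z) = z := by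
  have h9 : w (w⁻¹ z) = (w * w⁻¹) z := rfl
  rw [h9, mul_inv_cancel]
  rfl

lemma coroot_srefl_spec {b : X} (hb : b ∈ D.Phi) :
    ∃ u : AddAut X, ∃ i0 : I, u ∈ D.Wg ∧ b = u (D.α i0) ∧
      D.coroot b = D.actY u (D.αv i0) ∧ D.srefl b = u * D.sX i0 * u⁻¹ := by
  have h : ∃ p : AddAut X × I, p.1 ∈ D.Wg ∧ b = p.1 (D.α p.2) := hb
  exact ⟨h.choose.1, h.choose.2, h.choose_spec.1, h.choose_spec.2,
    by rw [coroot, dif_pos h], by rw [srefl, dif_pos h]⟩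

lemma srefl_mem_Wg {b : X} (hb : b ∈ D.Phi) : D.srefl b ∈ D.Wg := by
  obtain ⟨u, i0, hu, _, _, hs⟩ := D.coroot_srefl_spec hb
  rw [hs]
  exact Subgroup.mul_mem _ (Subgroup.mul_mem _ hu (D.sX_mem_Wg i0)) (Subgroup.inv_mem _ hu)

lemma pr_coroot_self {b : X} (hb : b ∈ D.Phi) : D.pr (D.coroot b) b = 2 := by
  obtain ⟨u, i0, hu, hbe, hc, _⟩ := D.coroot_srefl_spec hb
  rw [hc, hbe, D.pr_actY_apply, D.pr_av_a, D.A_diag]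

lemma actY_srefl {b : X} (hb : b ∈ D.Phi) (y : Y) :
    D.actY (D.srefl b) y = y - D.pr y b • D.coroot b := by
  obtain ⟨u, i0, hu, hbe, hc, hs⟩ := D.coroot_srefl_spec hb
  rw [hs, D.actY_mul, D.actY_mul, D.actY_sX, D.actY_sub, D.actY_zsmul]
  have h1 : D.actY u (D.actY u⁻¹ y) = y := by
    rw [← D.actY_mul, mul_inv_cancel, D.actY_one]
  have h2 : D.pr (D.actY u⁻¹ y) (D.α i0) = D.pr y b := by
    rw [D.pr_actY, inv_inv, hbe]
  rw [h1, h2, hc]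

lemma isgn_mul_self (n : ℤ) : isgn n * n = |n| := by
  unfold isgn
  rcases le_or_gt 0 n with h | h
  · rw [if_pos h, one_mul, abs_of_nonneg h]
  · rw [if_neg (by omega), abs_of_neg h]
    ring

end Aux9

end KM



/-- if `(π^λ w)⁻¹(β[n]) ∈ Φᵃ₊`, then writing `π^μ w' = s_{β[n]} π^λ w`,
`μ = λ + (n−⟨λ,β⟩)β^∨`, `s_β(μ) = λ − nβ^∨`, and `λ` lies on the segment `[μ, s_β(μ)]`;
in particular `μ ∈ Y⁺ → λ ∈ Y⁺`. -/
theorem statement19 {I X Y : Type*} [Fintype I] [AddCommGroup X] [AddCommGroup Y]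
    (D : KM I X Y)
    (lam : Y) (w : AddAut X) (hw : w ∈ D.Wg)
    (b : X) (hb : b ∈ D.PhiPos) (n : ℤ)
    (hpos : D.affAct (D.actY (w⁻¹) (-lam), w⁻¹) (KM.aroot b n) ∈ D.PhiAffPos) :
    (D.mulA (D.saff b n) (lam, w)).1 = lam + (n - D.pr lam b) • D.coroot b ∧
    D.actY (D.srefl b) (D.mulA (D.saff b n) (lam, w)).1 = lam - n • D.coroot b ∧
    lam = (D.mulA (D.saff b n) (lam, w)).1 - (n - D.pr lam b) • D.coroot b ∧
    0 ≤ isgn n * (n - D.pr lam b) ∧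
    ((D.mulA (D.saff b n) (lam, w)).1 ∈ D.Yplus → lam ∈ D.Yplus) := by
  have hbPhi : b ∈ D.Phi := hb.1
  set cb := D.coroot b with hcb
  set c := D.pr lam b with hc
  set k := n - c with hk
  have hμdef : (D.mulA (D.saff b n) (lam, w)).1 = n • cb + D.actY (D.srefl b) lam := rfl
  -- Part 1
  have part1 : (D.mulA (D.saff b n) (lam, w)).1 = lam + k • cb := by
    rw [hμdef, D.actY_srefl hbPhi, ← hcb, ← hc, hk]
    module
  -- Part 2
  have hprμ : D.pr (D.mulA (D.saff b n) (lam, w)).1 b = c + 2 * k := by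
    rw [part1, D.pr_add_left, D.pr_zsmul_left, hcb, D.pr_coroot_self hbPhi, ← hc]
    ring
  have part2 : D.actY (D.srefl b) (D.mulA (D.saff b n) (lam, w)).1 = lam - n • cb := by
    rw [D.actY_srefl hbPhi, hprμ, part1, ← hcb, hk]
    module
  -- Part 3
  have part3 : lam = (D.mulA (D.saff b n) (lam, w)).1 - k • cb := by
    rw [part1]
    module
  -- Part 4
  have part4 : 0 ≤ isgn n * k := by
    rcases hpos.2 with h | h
    · have h2 : D.affAct (D.actY (w⁻¹) (-lam), w⁻¹) (KM.aroot b n) =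
          (w⁻¹ (isgn n • b), |n| + D.pr (D.actY (w⁻¹) (-lam)) (w⁻¹ (isgn n • b))) := rfl
      rw [h2] at h
      simp only at h
      rw [D.pr_actY, inv_inv, KM.apply_inv_apply w, D.pr_neg_left, D.pr_zsmul_right, ← hc] at h
      have habs := KM.isgn_mul_self n
      have : isgn n * k = isgn n * n - isgn n * c := by rw [hk]; ring
      omega
    · have h2 : D.affAct (D.actY (w⁻¹) (-lam), w⁻¹) (KM.aroot b n) =
          (w⁻¹ (isgn n • b), |n| + D.pr (D.actY (w⁻¹) (-lam)) (w⁻¹ (isgn n • b))) := rfl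
      rw [h2] at h
      have h3 := h.1
      simp only at h3
      rw [D.pr_actY, inv_inv, KM.apply_inv_apply w, D.pr_neg_left, D.pr_zsmul_right, ← hc] at h3
      have habs := KM.isgn_mul_self n
      have : isgn n * k = isgn n * n - isgn n * c := by rw [hk]; ring
      omega
  -- Part 5
  have part5 : (D.mulA (D.saff b n) (lam, w)).1 ∈ D.Yplus → lam ∈ D.Yplus := by
    intro hμp
    set μ := (D.mulA (D.saff b n) (lam, w)).1 with hμ
    have hsμp : D.actY (D.srefl b) μ ∈ D.Yplus := D.Yplus_actY (D.srefl_mem_Wg hbPhi) hμp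
    -- sign alignment of k and n
    have hsign : (0 ≤ n ∧ 0 ≤ k) ∨ (n < 0 ∧ k ≤ 0) := by
      unfold isgn at part4
      rcases le_or_gt 0 n with h | h
      · left
        rw [if_pos h, one_mul] at part4
        exact ⟨h, part4⟩
      · right
        rw [if_neg (by omega)] at part4
        constructor
        · exact h
        · nlinarith
    have hsub : D.Nneg lam ⊆ D.Nneg μ ∪ D.Nneg (D.actY (D.srefl b) μ) := by
      rintro β ⟨hβpos, hβlt⟩
      set dd := D.pr cb β with hdd
      have hlamβ : D.pr lam β = D.pr μ β - k * dd := by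
        rw [part3, D.pr_sub_left, D.pr_zsmul_left, ← hdd]
      have hsβ : D.pr (D.actY (D.srefl b) μ) β = D.pr lam β - n * dd := by
        rw [part2, D.pr_sub_left, D.pr_zsmul_left, ← hdd]
      have hdisj : D.pr μ β < 0 ∨ D.pr (D.actY (D.srefl b) μ) β < 0 := by
        rcases hsign with ⟨hn, hkk⟩ | ⟨hn, hkk⟩ <;> rcases le_or_gt 0 dd with hd | hd
        · right; nlinarith
        · left; nlinarith
        · left; nlinarith
        · right; nlinarith
      rcases hdisj with h | h
      · exact Or.inl ⟨hβpos, h⟩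
      · exact Or.inr ⟨hβpos, h⟩
    have hfin : (D.Nneg lam).Finite :=
      Set.Finite.subset ((D.Nneg_finite_of_Yplus hμp).union (D.Nneg_finite_of_Yplus hsμp)) hsub
    exact D.Yplus_of_Nneg_finite _ lam hfin rfl
  exact ⟨part1, part2, part3, part4, part5⟩
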